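/- Let H_ρρ and W be symmetric positive definite matrices with W - H_ρρ positive semidefinite, and let Ĥ_d be symmetric positive semidefinite. Then for every index j, 0 ≤ λ_j(W^{-1} Ĥ_d) ≤ λ_j(H_ρρ^{-1} Ĥ_d), where λ_j denotes the j-th largest eigenvalue. -/

import Mathlib

open Matrix
noncomputable def Matrix.PosSemidef.sqrt {n 𝕜 : Type*} [Fintype n] [DecidableEq n] [RCLike 𝕜]
    [PartialOrder 𝕜]
    {A : Matrix n n 𝕜} (hA : A.PosSemidef) : Matrix n n 𝕜 :=
  hA.1.eigenvectorUnitary.1 * diagonal ((↑) ∘ Real.sqrt ∘ hA.1.eigenvalues) *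
  (star hA.1.eigenvectorUnitary : Matrix n n 𝕜)

lemma Matrix.PosSemidef.posSemidef_sqrt {m : Type*} [Fintype m] [DecidableEq m]
    {A : Matrix m m ℝ} (hA : A.PosSemidef) : hA.sqrt.PosSemidef := by
  unfold Matrix.PosSemidef.sqrt
  have hD : (diagonal (RCLike.ofReal ∘ Real.sqrt ∘ hA.1.eigenvalues) : Matrix m m ℝ).PosSemidef := by
    rw [posSemidef_diagonal_iff]; intro i; simp [Real.sqrt_nonneg]
  have := hD.mul_mul_conjTranspose_same (hA.1.eigenvectorUnitary : Matrix m m ℝ)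
  rw [Matrix.star_eq_conjTranspose]; exact this

lemma Matrix.PosSemidef.sqrt_mul_self {m : Type*} [Fintype m] [DecidableEq m]
    {A : Matrix m m ℝ} (hA : A.PosSemidef) : hA.sqrt * hA.sqrt = A := by
  unfold Matrix.PosSemidef.sqrt
  have hU : (star hA.1.eigenvectorUnitary : Matrix m m ℝ) * hA.1.eigenvectorUnitary.1 = 1 :=
    Unitary.coe_star_mul_self _
  have hDD : (diagonal (RCLike.ofReal ∘ Real.sqrt ∘ hA.1.eigenvalues) : Matrix m m ℝ) *
      diagonal (RCLike.ofReal ∘ Real.sqrt ∘ hA.1.eigenvalues) = diagonal (RCLike.ofReal ∘ hA.1.eigenvalues) := by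
    rw [diagonal_mul_diagonal]; congr 1; funext i
    simp [Real.mul_self_sqrt (hA.eigenvalues_nonneg i)]
  calc _ = hA.1.eigenvectorUnitary.1 * (diagonal (RCLike.ofReal ∘ Real.sqrt ∘ hA.1.eigenvalues) *
      ((star hA.1.eigenvectorUnitary : Matrix m m ℝ) * hA.1.eigenvectorUnitary.1) *
      diagonal (RCLike.ofReal ∘ Real.sqrt ∘ hA.1.eigenvalues)) *
      (star hA.1.eigenvectorUnitary : Matrix m m ℝ) := by simp only [Matrix.mul_assoc]
    _ = _ := by
      rw [hU, Matrix.mul_one, hDD]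
      conv_rhs => rw [hA.1.spectral_theorem]
      rfl

variable {n : ℕ}

private lemma dot_sum_right (u : Fin n → ℝ) (f : Fin n → Fin n → ℝ) :
    u ⬝ᵥ (∑ k, f k) = ∑ k, u ⬝ᵥ f k := by
  simp only [dotProduct, Finset.sum_apply, Finset.mul_sum]
  exact Finset.sum_comm

private lemma sum_dot_left (u : Fin n → ℝ) (f : Fin n → Fin n → ℝ) :
    (∑ k, f k) ⬝ᵥ u = ∑ k, f k ⬝ᵥ u := by
  simp only [dotProduct, Finset.sum_apply, Finset.sum_mul]
  exact Finset.sum_comm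

/-- Expansion of the quadratic form of a real symmetric matrix in its eigenbasis. -/
lemma quad_expand {M : Matrix (Fin n) (Fin n) ℝ} (hM : M.IsHermitian)
    (x : EuclideanSpace ℝ (Fin n)) :
    (x ⬝ᵥ M *ᵥ x = ∑ k, hM.eigenvalues k * (hM.eigenvectorBasis.repr x k) ^ 2) ∧
      (x ⬝ᵥ x = ∑ k, (hM.eigenvectorBasis.repr x k) ^ 2) := by
  set B := hM.eigenvectorBasis with hB
  set c : Fin n → ℝ := fun k => B.repr x k with hc
  set v : Fin n → Fin n → ℝ := fun k => B k with hv
  have hx' : ∑ k, c k • v k = x := by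
    simpa [c, v] using congrArg WithLp.ofLp (B.sum_repr x)
  have hMv : ∀ k, M *ᵥ v k = hM.eigenvalues k • v k := fun k => hM.mulVec_eigenvectorBasis k
  have hdot : ∀ k l, v k ⬝ᵥ v l = if k = l then 1 else 0 := by
    intro k l
    have h0 := B.orthonormal
    rw [orthonormal_iff_ite] at h0
    have h := h0 k l
    simpa [PiLp.inner_apply, RCLike.inner_apply, dotProduct, mul_comm] using h
  have key : ∀ d : Fin n → ℝ, (∑ k, c k • v k) ⬝ᵥ (∑ l, (c l * d l) • v l)
      = ∑ k, d k * c k ^ 2 := by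
    intro d
    rw [sum_dot_left, Finset.sum_congr rfl (fun l _ => dot_sum_right _ _)]
    refine Finset.sum_congr rfl fun k _ => ?_
    simp only [dotProduct_smul, smul_dotProduct, hdot, smul_eq_mul]
    rw [Finset.sum_eq_single k]
    · simp; ring
    · intro l _ hlk; rw [if_neg (Ne.symm hlk)]; ring
    · simp
  constructor
  · conv_lhs => rw [← hx']
    have hMx : M *ᵥ (∑ k, c k • v k) = ∑ l, (c l * hM.eigenvalues l) • v l := by
      have h1 : M *ᵥ (∑ k, c k • v k) = ∑ k, M *ᵥ (c k • v k) :=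
        map_sum (Matrix.mulVecLin M) _ _
      rw [h1]
      refine Finset.sum_congr rfl fun k _ => ?_
      rw [Matrix.mulVec_smul, hMv k, smul_smul, mul_comm]
    rw [hMx, key]
  · conv_lhs => rw [← hx']
    have := key (fun _ => 1)
    simpa using this

lemma courant_half {M : Matrix (Fin n) (Fin n) ℝ} (hM : M.IsHermitian) (T : Finset (Fin n)) :
    ∃ V : Submodule ℝ (Fin n → ℝ), Module.finrank ℝ V = T.card ∧
      ∀ x : Fin n → ℝ, x ∈ V → ∀ c : ℝ,
        ((∀ i ∈ T, c ≤ hM.eigenvalues i) → c * (x ⬝ᵥ x) ≤ x ⬝ᵥ M *ᵥ x) ∧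
        ((∀ i ∈ T, hM.eigenvalues i ≤ c) → x ⬝ᵥ M *ᵥ x ≤ c * (x ⬝ᵥ x)) := by
  classical
  set B := hM.eigenvectorBasis with hB
  set V₀ : Submodule ℝ (EuclideanSpace ℝ (Fin n)) :=
    Submodule.span ℝ (Set.range (fun i : T => B i)) with hV₀
  have hli : LinearIndependent ℝ (fun i : T => B i) :=
    (B.orthonormal.linearIndependent).comp _ Subtype.val_injective
  have hrank0 : Module.finrank ℝ V₀ = T.card := by
    rw [hV₀, finrank_span_eq_card hli, Fintype.card_coe]
  have hvanish : ∀ y ∈ V₀, ∀ k, k ∉ T → B.repr y k = 0 := by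
    intro y hy k hk
    have hle : V₀ ≤ LinearMap.ker ((LinearMap.proj k) ∘ₗ (WithLp.linearEquiv 2 ℝ (Fin n → ℝ)).toLinearMap ∘ₗ
        B.repr.toLinearEquiv.toLinearMap) := by
      rw [hV₀, Submodule.span_le]
      rintro - ⟨i, rfl⟩
      simp only [SetLike.mem_coe, LinearMap.mem_ker, LinearMap.comp_apply]
      have : B.repr (B i) = EuclideanSpace.single (i : Fin n) (1 : ℝ) := B.repr_self i
      show B.repr (B i) k = 0
      rw [this]
      have hki : k ≠ (i : Fin n) := fun h => hk (h ▸ i.2)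
      simp [EuclideanSpace.single_apply, hki]
    have := hle hy
    simpa using this
  refine ⟨V₀.map (WithLp.linearEquiv 2 ℝ (Fin n → ℝ) : _ →ₗ[ℝ] _), ?_, ?_⟩
  · rw [LinearEquiv.finrank_map_eq, hrank0]
  · rintro x hx c
    obtain ⟨y, hy, rfl⟩ := hx
    have hq := quad_expand hM y
    have hxy : ((WithLp.linearEquiv 2 ℝ (Fin n → ℝ) : _ →ₗ[ℝ] _) y : Fin n → ℝ) = y := rfl
    rw [hxy, hq.1, hq.2]
    have hsub : ∀ g : Fin n → ℝ, (∀ k ∉ T, g k = 0) →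
        ∑ k, g k = ∑ k ∈ T, g k := by
      intro g hg
      rw [← Finset.sum_subset (Finset.subset_univ T)]
      intro k _ hk
      exact hg k hk
    have hv0 : ∀ k ∉ T, B.repr y k = 0 := hvanish y hy
    rw [hsub (fun k => hM.eigenvalues k * (B.repr y k)^2) (by intro k hk; simp [hv0 k hk]),
      hsub (fun k => (B.repr y k)^2) (by intro k hk; simp [hv0 k hk]), Finset.mul_sum]
    constructor
    · intro hcle
      refine Finset.sum_le_sum fun k hk => ?_
      exact mul_le_mul_of_nonneg_right (hcle k hk) (sq_nonneg _)
    · intro hcge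
      refine Finset.sum_le_sum fun k hk => ?_
      exact mul_le_mul_of_nonneg_right (hcge k hk) (sq_nonneg _)

lemma exists_mem_inter {V V' : Submodule ℝ (Fin n → ℝ)}
    (h : n < Module.finrank ℝ V + Module.finrank ℝ V') :
    ∃ x : Fin n → ℝ, x ∈ V ∧ x ∈ V' ∧ x ≠ 0 := by
  have hfin : Module.finrank ℝ (Fin n → ℝ) = n := by simp
  have hsum := Submodule.finrank_sup_add_finrank_inf_eq V V'
  have hsup : Module.finrank ℝ ↥(V ⊔ V') ≤ n := by
    simpa [hfin] using Submodule.finrank_le (V ⊔ V')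
  have hpos : 0 < Module.finrank ℝ ↥(V ⊓ V') := by omega
  obtain ⟨x, hne⟩ := Module.finrank_pos_iff_exists_ne_zero.mp hpos
  exact ⟨x.1, x.2.1, x.2.2, fun h0 => hne (Subtype.ext h0)⟩

lemma dot_symm {S : Matrix (Fin n) (Fin n) ℝ} (hS : S.IsHermitian) (x w : Fin n → ℝ) :
    x ⬝ᵥ (S *ᵥ w) = (S *ᵥ x) ⬝ᵥ w := by
  have hT : Sᵀ = S := by
    have := hS
    rw [Matrix.IsHermitian] at this
    simpa [Matrix.conjTranspose_eq_transpose_of_trivial] using this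
  rw [Matrix.dotProduct_mulVec, ← Matrix.mulVec_transpose, hT]

/-- Transport of the eigen-subspace bounds through congruence by the inverse square root. -/
lemma congr_subspace {R : Matrix (Fin n) (Fin n) ℝ} (hA : R.IsHermitian)
    (hdet : IsUnit R.det) (V : Submodule ℝ (Fin n → ℝ)) :
    ∃ U : Submodule ℝ (Fin n → ℝ), Module.finrank ℝ U = Module.finrank ℝ V ∧
      ∀ u ∈ U, ∃ x ∈ V, u = R⁻¹ *ᵥ x ∧ x = R *ᵥ u := by
  have hinv : R.IsHermitian := hA
  have h1 : R⁻¹ * R = 1 := Matrix.nonsing_inv_mul R hdet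
  have h2 : R * R⁻¹ = 1 := Matrix.mul_nonsing_inv R hdet
  let eqv : (Fin n → ℝ) ≃ₗ[ℝ] (Fin n → ℝ) :=
    LinearEquiv.ofLinear (Matrix.mulVecLin R⁻¹) (Matrix.mulVecLin R)
      (by rw [← Matrix.mulVecLin_mul, h1, Matrix.mulVecLin_one])
      (by rw [← Matrix.mulVecLin_mul, h2, Matrix.mulVecLin_one])
  refine ⟨V.map (eqv : (Fin n → ℝ) →ₗ[ℝ] (Fin n → ℝ)),
    LinearEquiv.finrank_map_eq eqv V, ?_⟩
  rintro u ⟨x, hx, rfl⟩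
  refine ⟨x, hx, rfl, ?_⟩
  show x = R *ᵥ (R⁻¹ *ᵥ x)
  rw [Matrix.mulVec_mulVec, h2, Matrix.one_mulVec]

/-- If `H_ρρ` and `W` are symmetric positive definite with `W - H_ρρ` positive
semidefinite and `Ĥ_d` is symmetric positive semidefinite, then the decreasingly
sorted eigenvalues of `W⁻¹ Ĥ_d` (i.e. of `W^{-1/2} Ĥ_d W^{-1/2}`) are nonnegative and
bounded above, index by index, by those of `H_ρρ⁻¹ Ĥ_d`. -/
theorem stmt6 {n : ℕ} (Hρρ W Hd : Matrix (Fin n) (Fin n) ℝ)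
    (hHρρ : Hρρ.PosDef) (hW : W.PosDef) (hWH : (W - Hρρ).PosSemidef)
    (hHd : Hd.PosSemidef)
    (hMW : (hW.posSemidef.sqrt⁻¹ * Hd * hW.posSemidef.sqrt⁻¹).IsHermitian)
    (hMH : (hHρρ.posSemidef.sqrt⁻¹ * Hd * hHρρ.posSemidef.sqrt⁻¹).IsHermitian)
    (a b : Fin n → ℝ) (haanti : Antitone a) (hbanti : Antitone b)
    (ha : ∃ e : Equiv.Perm (Fin n), a = hMW.eigenvalues ∘ e)
    (hb : ∃ e : Equiv.Perm (Fin n), b = hMH.eigenvalues ∘ e) :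
    ∀ j : Fin n, 0 ≤ a j ∧ a j ≤ b j := by
  classical
  obtain ⟨eW, haW⟩ := ha
  obtain ⟨eH, hbH⟩ := hb
  intro j
  set RW := hW.posSemidef.sqrt with hRW
  set RH := hHρρ.posSemidef.sqrt with hRH
  have hRWh : RW.IsHermitian := hW.posSemidef.posSemidef_sqrt.1
  have hRHh : RH.IsHermitian := hHρρ.posSemidef.posSemidef_sqrt.1
  have hRWsq : RW * RW = W := hW.posSemidef.sqrt_mul_self
  have hRHsq : RH * RH = Hρρ := hHρρ.posSemidef.sqrt_mul_self
  have hdetW : IsUnit RW.det := by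
    have hWdet : W.det ≠ 0 := ne_of_gt hW.det_pos
    have : RW.det * RW.det = W.det := by rw [← Matrix.det_mul, hRWsq]
    exact isUnit_iff_ne_zero.mpr (fun h0 => hWdet (by rw [← this, h0, mul_zero]))
  have hdetH : IsUnit RH.det := by
    have hHdet : Hρρ.det ≠ 0 := ne_of_gt hHρρ.det_pos
    have : RH.det * RH.det = Hρρ.det := by rw [← Matrix.det_mul, hRHsq]
    exact isUnit_iff_ne_zero.mpr (fun h0 => hHdet (by rw [← this, h0, mul_zero]))
  have hRWih : (RW⁻¹).IsHermitian := hRWh.inv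
  have hRHih : (RH⁻¹).IsHermitian := hRHh.inv
  -- nonnegativity of a and b
  have hMWpsd : (RW⁻¹ * Hd * RW⁻¹).PosSemidef := by
    have h := hHd.conjTranspose_mul_mul_same (RW⁻¹)
    rwa [hRWih] at h
  have hMHpsd : (RH⁻¹ * Hd * RH⁻¹).PosSemidef := by
    have h := hHd.conjTranspose_mul_mul_same (RH⁻¹)
    rwa [hRHih] at h
  have ha0 : 0 ≤ a j := by
    rw [haW]; exact hMWpsd.eigenvalues_nonneg (eW j)
  have hb0 : 0 ≤ b j := by
    rw [hbH]; exact hMHpsd.eigenvalues_nonneg (eH j)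
  refine ⟨ha0, ?_⟩
  -- subspace for the W side (lower bound by a j on top j+1 eigenvectors)
  obtain ⟨V₁, hV₁rank, hV₁spec⟩ := courant_half hMW ((Finset.Iic j).image eW)
  obtain ⟨V₂, hV₂rank, hV₂spec⟩ := courant_half hMH ((Finset.Ici j).image eH)
  have hV₁card : Module.finrank ℝ V₁ = (j : ℕ) + 1 := by
    rw [hV₁rank, Finset.card_image_of_injective _ eW.injective, Fin.card_Iic]
  have hV₂card : Module.finrank ℝ V₂ = n - (j : ℕ) := by
    rw [hV₂rank, Finset.card_image_of_injective _ eH.injective, Fin.card_Ici]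
  -- transport through the square roots
  obtain ⟨U₁, hU₁rank, hU₁spec⟩ := congr_subspace hRWh hdetW V₁
  obtain ⟨U₂, hU₂rank, hU₂spec⟩ := congr_subspace hRHh hdetH V₂
  have hjn : (j : ℕ) < n := j.2
  obtain ⟨u, hu₁, hu₂, hu0⟩ := exists_mem_inter (V := U₁) (V' := U₂)
    (by rw [hU₁rank, hU₂rank, hV₁card, hV₂card]; omega)
  obtain ⟨x, hxV, hux, hxu⟩ := hU₁spec u hu₁
  obtain ⟨y, hyV, huy, hyu⟩ := hU₂spec u hu₂
  -- quadratic form identities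
  have quadW : x ⬝ᵥ (RW⁻¹ * Hd * RW⁻¹) *ᵥ x = u ⬝ᵥ Hd *ᵥ u := by
    rw [mul_assoc RW⁻¹ Hd RW⁻¹, ← Matrix.mulVec_mulVec x RW⁻¹ (Hd * RW⁻¹), dot_symm hRWih,
      ← Matrix.mulVec_mulVec x Hd RW⁻¹, ← hux]
  have quadH : y ⬝ᵥ (RH⁻¹ * Hd * RH⁻¹) *ᵥ y = u ⬝ᵥ Hd *ᵥ u := by
    rw [mul_assoc RH⁻¹ Hd RH⁻¹, ← Matrix.mulVec_mulVec y RH⁻¹ (Hd * RH⁻¹), dot_symm hRHih,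
      ← Matrix.mulVec_mulVec y Hd RH⁻¹, ← huy]
  have normW : x ⬝ᵥ x = u ⬝ᵥ W *ᵥ u := by
    rw [hxu, dot_symm hRWh, Matrix.mulVec_mulVec, hRWsq]
    exact (dot_symm hW.1 u u).symm
  have normH : y ⬝ᵥ y = u ⬝ᵥ Hρρ *ᵥ u := by
    rw [hyu, dot_symm hRHh, Matrix.mulVec_mulVec, hRHsq]
    exact (dot_symm hHρρ.1 u u).symm
  -- spectral bounds
  have hlow : a j * (x ⬝ᵥ x) ≤ x ⬝ᵥ (RW⁻¹ * Hd * RW⁻¹) *ᵥ x := by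
    refine (hV₁spec x hxV (a j)).1 ?_
    intro i hi
    obtain ⟨i₀, hi₀, rfl⟩ := Finset.mem_image.mp hi
    have : hMW.eigenvalues (eW i₀) = a i₀ := by rw [haW]; rfl
    rw [this]
    exact haanti (Finset.mem_Iic.mp hi₀)
  have hhigh : y ⬝ᵥ (RH⁻¹ * Hd * RH⁻¹) *ᵥ y ≤ b j * (y ⬝ᵥ y) := by
    refine (hV₂spec y hyV (b j)).2 ?_
    intro i hi
    obtain ⟨i₀, hi₀, rfl⟩ := Finset.mem_image.mp hi
    have : hMH.eigenvalues (eH i₀) = b i₀ := by rw [hbH]; rfl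
    rw [this]
    exact hbanti (Finset.mem_Ici.mp hi₀)
  -- the Loewner inequality between W and Hρρ
  have hWHle : u ⬝ᵥ Hρρ *ᵥ u ≤ u ⬝ᵥ W *ᵥ u := by
    have h := hWH.dotProduct_mulVec_nonneg u
    have hstar : star u = u := by
      funext i; simp
    rw [hstar, Matrix.sub_mulVec, dotProduct_sub] at h
    linarith
  have hWpos : 0 < u ⬝ᵥ W *ᵥ u := by
    have h := hW.dotProduct_mulVec_pos hu0
    have hstar : star u = u := by funext i; simp
    rwa [hstar] at h
  -- combine
  have hfinal : a j * (u ⬝ᵥ W *ᵥ u) ≤ b j * (u ⬝ᵥ W *ᵥ u) := by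
    calc a j * (u ⬝ᵥ W *ᵥ u) = a j * (x ⬝ᵥ x) := by rw [normW]
      _ ≤ x ⬝ᵥ (RW⁻¹ * Hd * RW⁻¹) *ᵥ x := hlow
      _ = u ⬝ᵥ Hd *ᵥ u := quadW
      _ = y ⬝ᵥ (RH⁻¹ * Hd * RH⁻¹) *ᵥ y := quadH.symm
      _ ≤ b j * (y ⬝ᵥ y) := hhigh
      _ = b j * (u ⬝ᵥ Hρρ *ᵥ u) := by rw [normH]
      _ ≤ b j * (u ⬝ᵥ W *ᵥ u) := mul_le_mul_of_nonneg_left hWHle hb0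
  exact le_of_mul_le_mul_right hfinal hWpos
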